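/- arXiv:quant-ph/9901029 — 4 statements merged into one kernel-verified Lean document; each statement's English description precedes it below -/
import Mathlib

section
/- Let n and m be positive integers, let Γ₁ and Γ₂ be simple graphs on n vertices, let Γ be their disjoint union, and let H ≤ G = S_n ≀ S_2 be the subgroup of elements acting as automorphisms of Γ. If Γ₁ and Γ₂ are isomorphic, then for every c ∈ G^m the tensor product of coset states ψ_c satisfies ⟪ψ_c, P₁ ψ_c⟫ = 1, where P₁ is the orthogonal projection onto ℋ₁. -/
open scoped Classical

@[ext] structure Wr (n : ℕ) where
  fst : Equiv.Perm (Fin n)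
  snd : Equiv.Perm (Fin n)
  bit : ZMod 2
  deriving DecidableEq, Fintype

namespace Wr

variable {n : ℕ}

protected def mul (x y : Wr n) : Wr n :=
  ⟨if x.bit = 0 then x.fst * y.fst else x.fst * y.snd,
   if x.bit = 0 then x.snd * y.snd else x.snd * y.fst,
   x.bit + y.bit⟩

protected def inv (x : Wr n) : Wr n :=
  ⟨if x.bit = 0 then x.fst⁻¹ else x.snd⁻¹,
   if x.bit = 0 then x.snd⁻¹ else x.fst⁻¹,
   x.bit⟩

instance : Group (Wr n) where
  mul := Wr.mul
  one := ⟨1, 1, 0⟩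
  inv := Wr.inv
  mul_assoc x y z := by
    show Wr.mul (Wr.mul x y) z = Wr.mul x (Wr.mul y z)
    obtain ⟨a, b, c⟩ := x; obtain ⟨d, e, f⟩ := y; obtain ⟨g, h, i⟩ := z
    rcases (show ∀ j : ZMod 2, j = 0 ∨ j = 1 by decide) c with rfl | rfl <;>
      rcases (show ∀ j : ZMod 2, j = 0 ∨ j = 1 by decide) f with rfl | rfl <;>
      simp [Wr.mul, mul_assoc, show (1 : ZMod 2) ≠ 0 by decide,
        show (1 + 1 : ZMod 2) = 0 by decide, show ∀ j : ZMod 2, 1 + (1 + j) = j by decide]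
  one_mul x := by
    show Wr.mul ⟨1, 1, 0⟩ x = x
    simp [Wr.mul]
  mul_one x := by
    show Wr.mul x ⟨1, 1, 0⟩ = x
    obtain ⟨a, b, c⟩ := x
    rcases (show ∀ j : ZMod 2, j = 0 ∨ j = 1 by decide) c with rfl | rfl <;> simp [Wr.mul]
  inv_mul_cancel x := by
    show Wr.mul (Wr.inv x) x = ⟨1, 1, 0⟩
    obtain ⟨a, b, c⟩ := x
    rcases (show ∀ j : ZMod 2, j = 0 ∨ j = 1 by decide) c with rfl | rfl <;> simp [Wr.mul, Wr.inv, show (1 : ZMod 2) ≠ 0 by decide,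
      show (1 + 1 : ZMod 2) = 0 by decide]

/-- An involutive swap: an element of the form `(g, g⁻¹, 1)`. -/
def IsSwap (k : Wr n) : Prop := ∃ g : Equiv.Perm (Fin n), k = ⟨g, g⁻¹, 1⟩

/-- The faithful action of `S_n ≀ S_2` on `Fin n ⊕ Fin n`:
`ι(σ,τ,0)` maps `inl i ↦ inl (σ i)`, `inr i ↦ inr (τ i)`, while
`ι(σ,τ,1)` maps `inl i ↦ inr (τ i)`, `inr i ↦ inl (σ i)`. -/
def iota : Wr n →* Equiv.Perm (Fin n ⊕ Fin n) where
  toFun x := Equiv.sumCongr x.fst x.snd *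
    (if x.bit = 0 then 1 else Equiv.sumComm (Fin n) (Fin n))
  map_one' := by
    simp [show ((1 : Wr n)).bit = 0 from rfl, show ((1 : Wr n)).fst = 1 from rfl,
      show ((1 : Wr n)).snd = 1 from rfl]
  map_mul' x y := by
    have hxy : x * y = Wr.mul x y := rfl
    obtain ⟨a, b, c⟩ := x; obtain ⟨d, e, f⟩ := y
    rw [hxy]
    rcases (show ∀ j : ZMod 2, j = 0 ∨ j = 1 by decide) c with rfl | rfl <;>
      rcases (show ∀ j : ZMod 2, j = 0 ∨ j = 1 by decide) f with rfl | rfl <;>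
      · ext u
        rcases u with u | u <;>
          simp [Wr.mul, show (1 : ZMod 2) ≠ 0 by decide,
            show (1 + 1 : ZMod 2) = 0 by decide, Equiv.Perm.mul_apply]

end Wr

/-- The Hilbert space `ℂ[G^m]`. -/
abbrev GIHilb (n m : ℕ) : Type := EuclideanSpace ℂ (Fin m → Wr n)

noncomputable section

namespace Wr

/-- The `k`-vector associated to `c ∈ G^m`:
`x ↦ 2^{-m/2} ∏_i [x i ∈ {c i, c i * k}]`. -/
def kvec (n m : ℕ) (k : Wr n) (c : Fin m → Wr n) : GIHilb n m :=
  (WithLp.equiv 2 _).symm fun x =>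
    ((Real.sqrt (2 ^ m) : ℝ)⁻¹ : ℂ) *
      ∏ i, (if x i = c i ∨ x i = c i * k then (1 : ℂ) else 0)

/-- `ℋ(k)`: the span of all `k`-vectors. -/
def kSpace (n m : ℕ) (k : Wr n) : Submodule ℂ (GIHilb n m) :=
  Submodule.span ℂ (Set.range (kvec n m k))

/-- `ℋ₁ = ∑_k ℋ(k)`, the sum over all involutive swaps `k`. -/
def H1 (n m : ℕ) : Submodule ℂ (GIHilb n m) :=
  ⨆ k ∈ {k : Wr n | IsSwap k}, kSpace n m k

/-- The tensor product of coset states of the subgroup `H` with coset representatives `c`: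
`x ↦ |H|^{-m/2} ∏_i [x i ∈ c i H]`. -/
def cosetState {n : ℕ} (H : Subgroup (Wr n)) (m : ℕ) (c : Fin m → Wr n) : GIHilb n m :=
  (WithLp.equiv 2 _).symm fun x =>
    ((Real.sqrt ((Nat.card H : ℝ) ^ m))⁻¹ : ℂ) *
      ∏ i, (if (c i)⁻¹ * x i ∈ H then (1 : ℂ) else 0)

end Wr

/-- The subgroup of `S_n ≀ S_2` of elements acting (via `ι`) as automorphisms of the graph `Γ`. -/
def autSubgroup {n : ℕ} (Γ : SimpleGraph (Fin n ⊕ Fin n)) : Subgroup (Wr n) where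
  carrier := {h | ∀ u v, Γ.Adj (Wr.iota h u) (Wr.iota h v) ↔ Γ.Adj u v}
  one_mem' := by intro u v; simp
  mul_mem' := by
    intro a b ha hb u v
    rw [map_mul, Equiv.Perm.mul_apply, Equiv.Perm.mul_apply, ha, hb]
  inv_mem' := by
    intro a ha u v
    have := ha ((Wr.iota a)⁻¹ u) ((Wr.iota a)⁻¹ v)
    simpa [map_inv] using this.symm

end

open scoped ComplexOrder


noncomputable section AuxProofs

open Finset

lemma euclid_sum_apply {β ι : Type*} (T : Finset β) (v : β → EuclideanSpace ℂ ι) (x : ι) :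
    (∑ d ∈ T, v d) x = ∑ d ∈ T, v d x := by
  classical
  induction T using Finset.cons_induction with
  | empty => rfl
  | cons a s ha ih => rw [Finset.sum_cons, Finset.sum_cons, ← ih]; rfl

namespace Wr

variable {n : ℕ}

lemma mul_def (x y : Wr n) : x * y = Wr.mul x y := rfl

lemma swap_isSwap (g : Equiv.Perm (Fin n)) : IsSwap (⟨g, g⁻¹, 1⟩ : Wr n) := ⟨g, rfl⟩

lemma swap_mul_self (g : Equiv.Perm (Fin n)) :
    (⟨g, g⁻¹, 1⟩ : Wr n) * ⟨g, g⁻¹, 1⟩ = 1 := by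
  rw [mul_def]
  show (⟨_, _, _⟩ : Wr n) = ⟨1, 1, 0⟩
  simp [Wr.mul, show (1 : ZMod 2) ≠ 0 by decide, show (1 + 1 : ZMod 2) = 0 by decide]

lemma ne_mul_swap (g : Equiv.Perm (Fin n)) (x : Wr n) : x ≠ x * ⟨g, g⁻¹, 1⟩ := by
  intro h
  have hb : x.bit = x.bit + 1 := congrArg Wr.bit h
  simp at hb

lemma eq_mul_swap_iff (g : Equiv.Perm (Fin n)) (x d : Wr n) :
    x = d * ⟨g, g⁻¹, 1⟩ ↔ d = x * ⟨g, g⁻¹, 1⟩ := by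
  constructor
  · rintro rfl; rw [mul_assoc, swap_mul_self, mul_one]
  · rintro rfl; rw [mul_assoc, swap_mul_self, mul_one]

lemma count_pair (H : Subgroup (Wr n)) (g : Equiv.Perm (Fin n))
    (hk : (⟨g, g⁻¹, 1⟩ : Wr n) ∈ H) (c x : Wr n) :
    (∑ d ∈ univ.filter (fun d => c⁻¹ * d ∈ H),
      (if x = d ∨ x = d * ⟨g, g⁻¹, 1⟩ then (1 : ℂ) else 0))
    = if c⁻¹ * x ∈ H then 2 else 0 := by
  set k : Wr n := ⟨g, g⁻¹, 1⟩ with hkdef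
  have hxx : x ≠ x * k := ne_mul_swap g x
  rw [Finset.sum_filter]
  have key : ∀ d : Wr n,
      (if c⁻¹ * d ∈ H then (if x = d ∨ x = d * k then (1 : ℂ) else 0) else 0)
      = (if d = x then (if c⁻¹ * d ∈ H then (1 : ℂ) else 0) else 0)
        + (if d = x * k then (if c⁻¹ * d ∈ H then (1 : ℂ) else 0) else 0) := by
    intro d
    have hiff : (x = d ∨ x = d * k) ↔ (d = x ∨ d = x * k) := by
      rw [eq_mul_swap_iff, eq_comm]
    by_cases h1 : d = x
    · subst h1
      have h2 : ¬ d = d * k := hxx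
      simp [h2, hxx.symm]
    · by_cases h2 : d = x * k
      · subst h2
        have hxk : x = x * k * k := by rw [mul_assoc, swap_mul_self, mul_one]
        simp [h1, ← hxk]
      · have hno : ¬ (x = d ∨ x = d * k) := by rw [hiff]; tauto
        simp [h1, h2, hno]
  rw [Finset.sum_congr rfl (fun d _ => key d), Finset.sum_add_distrib,
    Finset.sum_ite_eq' univ x, Finset.sum_ite_eq' univ (x * k)]
  have hH : c⁻¹ * (x * k) ∈ H ↔ c⁻¹ * x ∈ H := by
    rw [← mul_assoc]; exact H.mul_mem_cancel_right hk
  simp only [Finset.mem_univ, if_true]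
  by_cases hx : c⁻¹ * x ∈ H
  · rw [if_pos hx, if_pos (hH.2 hx), if_pos hx]; norm_num
  · rw [if_neg hx, if_neg (fun h => hx (hH.1 h)), if_neg hx]; norm_num

lemma coset_card (H : Subgroup (Wr n)) (c : Wr n) :
    ∑ x : Wr n, (if c⁻¹ * x ∈ H then (1 : ℂ) else 0) = (Nat.card H : ℂ) := by
  have h1 : ∑ x : Wr n, (if c⁻¹ * x ∈ H then (1 : ℂ) else 0)
      = ∑ x : Wr n, (if x ∈ H then (1 : ℂ) else 0) := by
    refine (Fintype.sum_equiv (Equiv.mulLeft c) _ _ (fun x => ?_)).symm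
    simp [mul_assoc]
  rw [h1, Finset.sum_boole]
  norm_cast
  rw [Nat.card_eq_fintype_card]
  exact (Fintype.card_subtype _).symm

end Wr

end AuxProofs

/-- If `Γ₁` and `Γ₂` are isomorphic then the tensor product of coset states `ψ_c` of the
automorphism subgroup `H ≤ S_n ≀ S_2` of the disjoint union `Γ` satisfies
`⟪ψ_c, P₁ ψ_c⟫ = 1`, where `P₁` is the orthogonal projection onto `ℋ₁`. -/
theorem iso_implies_inner_proj_H1_eq_one
    (n m : ℕ) (hn : 0 < n) (hm : 0 < m)
    (Γ₁ Γ₂ : SimpleGraph (Fin n))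
    (hiso : Nonempty (Γ₁ ≃g Γ₂))
    (c : Fin m → Wr n) :
    inner (𝕜 := ℂ) (Wr.cosetState (autSubgroup (Γ₁ ⊕g Γ₂)) m c)
      (((Wr.H1 n m).orthogonalProjectionOnto
        (Wr.cosetState (autSubgroup (Γ₁ ⊕g Γ₂)) m c) : GIHilb n m)) = 1 := by
  classical
  obtain ⟨e⟩ := hiso
  set H : Subgroup (Wr n) := autSubgroup (Γ₁ ⊕g Γ₂) with hHdef
  set g : Equiv.Perm (Fin n) := (e.toEquiv.symm : Equiv.Perm (Fin n)) with hgdef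
  set k : Wr n := ⟨g, g⁻¹, 1⟩ with hkdef
  have hg_inv : g⁻¹ = (e.toEquiv : Equiv.Perm (Fin n)) := rfl
  have he1 : ∀ u v : Fin n, Γ₂.Adj (e.toEquiv u) (e.toEquiv v) ↔ Γ₁.Adj u v :=
    fun u v => e.map_adj_iff
  have he2 : ∀ u v : Fin n, Γ₁.Adj (e.toEquiv.symm u) (e.toEquiv.symm v) ↔ Γ₂.Adj u v :=
    fun u v => e.symm.map_adj_iff
  have hkH : k ∈ H := by
    intro u v
    have hbit : k.bit ≠ 0 := by show (1 : ZMod 2) ≠ 0; decide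
    rcases u with u | u <;> rcases v with v | v <;>
      simp [Wr.iota, hbit, show k.fst = g from rfl, show k.snd = g⁻¹ from rfl, hgdef, hg_inv, Equiv.Perm.inv_def, Equiv.symm_symm,
        SimpleGraph.sum_adj, Equiv.Perm.mul_apply, he1, he2, e.map_adj_iff,
        e.symm.map_adj_iff]
  set ψ := Wr.cosetState H m c with hψdef
  set N : ℕ := Nat.card H with hNdef
  have hN : 0 < N := Nat.card_pos
  set T : Finset (Fin m → Wr n) :=
    Fintype.piFinset (fun i => Finset.univ.filter fun d => (c i)⁻¹ * d ∈ H) with hTdef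
  set r : ℂ := (((Real.sqrt ((N : ℝ) ^ m)) : ℝ) : ℂ)⁻¹ * (((Real.sqrt (2 ^ m)) : ℝ) : ℂ)⁻¹
    with hrdef
  have hsqrt2 : ((Real.sqrt (2 ^ m) : ℝ) : ℂ) * ((Real.sqrt (2 ^ m) : ℝ) : ℂ) = (2 : ℂ) ^ m := by
    norm_cast
    rw [Real.mul_self_sqrt (by positivity)]
  have hsqrt2_ne : ((Real.sqrt (2 ^ m) : ℝ) : ℂ) ≠ 0 := by
    norm_cast
    positivity
  have hsqrtN : ((Real.sqrt ((N : ℝ) ^ m) : ℝ) : ℂ) * ((Real.sqrt ((N : ℝ) ^ m) : ℝ) : ℂ)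
      = ((N : ℂ)) ^ m := by
    norm_cast
    rw [Real.mul_self_sqrt (by positivity)]
  have hψeq : ψ = r • ∑ d ∈ T, Wr.kvec n m k d := by
    apply PiLp.ext
    intro x
    have hkv : ∀ d : Fin m → Wr n, Wr.kvec n m k d x
        = ((Real.sqrt (2 ^ m) : ℝ) : ℂ)⁻¹ *
            ∏ i, (if x i = d i ∨ x i = d i * k then (1 : ℂ) else 0) := fun _ => rfl
    have hcs : ψ x = ((Real.sqrt ((N : ℝ) ^ m) : ℝ) : ℂ)⁻¹ *
        ∏ i, (if (c i)⁻¹ * x i ∈ H then (1 : ℂ) else 0) := rfl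
    have hsm : (r • ∑ d ∈ T, Wr.kvec n m k d) x = r * (∑ d ∈ T, Wr.kvec n m k d) x := rfl
    rw [hcs, hsm, euclid_sum_apply, Finset.sum_congr rfl (fun d _ => hkv d), ← Finset.mul_sum,
      hTdef, ← Finset.prod_univ_sum
        (fun i => Finset.univ.filter fun d => (c i)⁻¹ * d ∈ H)
        (fun i d => if x i = d ∨ x i = d * k then (1 : ℂ) else 0)]
    have hcp : ∀ i : Fin m,
        (∑ d ∈ Finset.univ.filter (fun d => (c i)⁻¹ * d ∈ H),
          (if x i = d ∨ x i = d * k then (1 : ℂ) else 0))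
        = 2 * (if (c i)⁻¹ * x i ∈ H then (1 : ℂ) else 0) := by
      intro i
      rw [hkdef, Wr.count_pair H g hkH (c i) (x i)]
      by_cases h : (c i)⁻¹ * x i ∈ H <;> simp [h]
    rw [Finset.prod_congr rfl (fun i _ => hcp i), Finset.prod_mul_distrib,
      Finset.prod_const, Finset.card_univ, Fintype.card_fin]
    have hscal : r * (((Real.sqrt (2 ^ m) : ℝ) : ℂ)⁻¹ * (2 : ℂ) ^ m)
        = ((Real.sqrt ((N : ℝ) ^ m) : ℝ) : ℂ)⁻¹ := by
      rw [hrdef, ← hsqrt2]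
      field_simp
    rw [← hscal]
    ring
  have hswap : Wr.IsSwap k := Wr.swap_isSwap g
  have hmem : ψ ∈ Wr.H1 n m := by
    rw [hψeq]
    refine Submodule.smul_mem _ _ (Submodule.sum_mem _ fun d _ => ?_)
    have h1 : Wr.kvec n m k d ∈ Wr.kSpace n m k := Submodule.subset_span ⟨d, rfl⟩
    have h2 : Wr.kSpace n m k ≤ Wr.H1 n m :=
      le_iSup₂ (f := fun (k : Wr n) (_ : k ∈ {k : Wr n | Wr.IsSwap k}) => Wr.kSpace n m k) k hswap
    exact h2 h1
  rw [show ((Wr.H1 n m).orthogonalProjectionOnto ψ : GIHilb n m) = ψ from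
    Submodule.starProjection_eq_self_iff.2 hmem]
  -- Now compute ⟪ψ, ψ⟫ = 1
  have hval : ∀ x : Fin m → Wr n, ψ x
      = ((Real.sqrt ((N : ℝ) ^ m) : ℝ) : ℂ)⁻¹ *
          ∏ i, (if (c i)⁻¹ * x i ∈ H then (1 : ℂ) else 0) := fun x => rfl
  have hinner : inner (𝕜 := ℂ) ψ ψ = ∑ x : Fin m → Wr n,
      (starRingEnd ℂ) (ψ x) * (ψ x) := by
    rw [PiLp.inner_apply]
    refine Finset.sum_congr rfl fun x _ => ?_
    rw [RCLike.inner_apply]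
    ring
  rw [hinner]
  have hterm : ∀ x : Fin m → Wr n,
      (starRingEnd ℂ) (ψ x) * (ψ x)
      = ((N : ℂ) ^ m)⁻¹ * ∏ i, (if (c i)⁻¹ * x i ∈ H then (1 : ℂ) else 0) := by
    intro x
    rw [hval]
    have hconj : (starRingEnd ℂ) (((Real.sqrt ((N : ℝ) ^ m) : ℝ) : ℂ)⁻¹ *
        ∏ i, (if (c i)⁻¹ * x i ∈ H then (1 : ℂ) else 0))
        = ((Real.sqrt ((N : ℝ) ^ m) : ℝ) : ℂ)⁻¹ *
          ∏ i, (if (c i)⁻¹ * x i ∈ H then (1 : ℂ) else 0) := by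
      rw [map_mul, map_inv₀, Complex.conj_ofReal, map_prod]
      congr 1
      exact Finset.prod_congr rfl fun i _ => by split <;> simp
    rw [hconj]
    have hsq : ((Real.sqrt ((N : ℝ) ^ m) : ℝ) : ℂ)⁻¹ * ((Real.sqrt ((N : ℝ) ^ m) : ℝ) : ℂ)⁻¹
        = ((N : ℂ) ^ m)⁻¹ := by
      rw [← mul_inv, hsqrtN]
    have hprodsq : (∏ i, (if (c i)⁻¹ * x i ∈ H then (1 : ℂ) else 0)) *
        (∏ i, (if (c i)⁻¹ * x i ∈ H then (1 : ℂ) else 0))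
        = ∏ i, (if (c i)⁻¹ * x i ∈ H then (1 : ℂ) else 0) := by
      rw [← Finset.prod_mul_distrib]
      exact Finset.prod_congr rfl fun i _ => by split <;> simp
    calc ((Real.sqrt ((N : ℝ) ^ m) : ℝ) : ℂ)⁻¹ *
          (∏ i, (if (c i)⁻¹ * x i ∈ H then (1 : ℂ) else 0)) *
          (((Real.sqrt ((N : ℝ) ^ m) : ℝ) : ℂ)⁻¹ *
            ∏ i, (if (c i)⁻¹ * x i ∈ H then (1 : ℂ) else 0))
        = (((Real.sqrt ((N : ℝ) ^ m) : ℝ) : ℂ)⁻¹ * ((Real.sqrt ((N : ℝ) ^ m) : ℝ) : ℂ)⁻¹) *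
          ((∏ i, (if (c i)⁻¹ * x i ∈ H then (1 : ℂ) else 0)) *
            ∏ i, (if (c i)⁻¹ * x i ∈ H then (1 : ℂ) else 0)) := by ring
      _ = _ := by rw [hsq, hprodsq]
  rw [Finset.sum_congr rfl (fun x _ => hterm x), ← Finset.mul_sum]
  have hbig : ∑ x : Fin m → Wr n, ∏ i, (if (c i)⁻¹ * x i ∈ H then (1 : ℂ) else 0)
      = (N : ℂ) ^ m := by
    rw [← Fintype.prod_sum (fun (i : Fin m) (d : Wr n) => if (c i)⁻¹ * d ∈ H then (1 : ℂ) else 0)]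
    rw [Finset.prod_congr rfl (fun i _ => Wr.coset_card H (c i)), Finset.prod_const,
      Finset.card_univ, Fintype.card_fin]
  rw [hbig]
  exact inv_mul_cancel₀ (pow_ne_zero _ (Nat.cast_ne_zero.2 hN.ne'))
end

section
/- Let n and m be positive integers, G = S_n ≀ S_2, and let H be any subgroup of G that contains at least one involutive swap. Then for every c ∈ G^m, the tensor product of coset states ψ_c lies in the subspace ℋ₁; in particular ⟪ψ_c, P₁ ψ_c⟫ = 1. -/
open scoped Classical

section AuxLemmas

variable {G : Type*} [Group G] [Fintype G]

private lemma aux_coord_sum (H : Subgroup G) {k : G} (hk1 : k ≠ 1) (hkH : k ∈ H)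
    (ci xi : G) :
    ∑ h : H, (if xi = ci * (h : G) ∨ xi = ci * (h : G) * k then (1:ℂ) else 0)
      = 2 * (if ci⁻¹ * xi ∈ H then 1 else 0) := by
  classical
  by_cases hmem : ci⁻¹ * xi ∈ H
  · have hbmem : ci⁻¹ * xi * k⁻¹ ∈ H := H.mul_mem hmem (H.inv_mem hkH)
    set a : H := ⟨ci⁻¹ * xi, hmem⟩ with ha
    set b : H := ⟨ci⁻¹ * xi * k⁻¹, hbmem⟩ with hb
    have hab : a ≠ b := by
      intro hEq
      apply hk1
      have h2 : ci⁻¹ * xi = ci⁻¹ * xi * k⁻¹ := congrArg Subtype.val hEq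
      have := (mul_eq_left (a := ci⁻¹ * xi) (b := k⁻¹)).mp h2.symm
      simpa using this
    have hcond : ∀ h : H, (xi = ci * (h : G) ∨ xi = ci * (h : G) * k)
        ↔ (h = a ∨ h = b) := by
      intro h
      constructor
      · rintro (h1 | h1)
        · left; ext; simp [ha, h1]
        · right; ext; simp [hb, h1, mul_assoc]
      · rintro (rfl | rfl)
        · left; simp [ha]
        · right; simp [hb, mul_assoc]
    calc ∑ h : H, (if xi = ci * (h : G) ∨ xi = ci * (h : G) * k then (1:ℂ) else 0)
        = ∑ h : H, ((if h = a then (1:ℂ) else 0) + (if h = b then (1:ℂ) else 0)) := by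
          refine Finset.sum_congr rfl fun h _ => ?_
          rw [if_congr (hcond h) rfl rfl]
          by_cases h1 : h = a <;> by_cases h2 : h = b
          · exact absurd (h1.symm.trans h2) hab
          · rw [if_pos (Or.inl h1), if_pos h1, if_neg h2]; norm_num
          · rw [if_pos (Or.inr h2), if_neg h1, if_pos h2]; norm_num
          · rw [if_neg (by tauto), if_neg h1, if_neg h2]; norm_num
      _ = 2 * (if ci⁻¹ * xi ∈ H then 1 else 0) := by
          rw [Finset.sum_add_distrib]
          simp [hmem]
          ring
  · rw [Finset.sum_eq_zero, if_neg hmem, mul_zero]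
    intro h _
    rw [if_neg]
    rintro (h1 | h1)
    · exact hmem (by simpa [h1] using h.2)
    · apply hmem
      have : ci⁻¹ * xi = (h : G) * k := by rw [h1]; group
      rw [this]; exact H.mul_mem h.2 hkH

private lemma aux_coset_count (H : Subgroup G) (ci : G) :
    ∑ y : G, (if ci⁻¹ * y ∈ H then (1:ℂ) else 0) = (Nat.card H : ℂ) := by
  classical
  rw [← Fintype.sum_equiv (Equiv.mulLeft ci)
    (fun z : G => if z ∈ H then (1:ℂ) else 0)
    (fun y : G => if ci⁻¹ * y ∈ H then (1:ℂ) else 0) (fun z => by simp)]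
  rw [Finset.sum_boole]
  simp [Nat.card_eq_fintype_card, Fintype.card_subtype]

end AuxLemmas


open scoped ComplexOrder

set_option maxHeartbeats 2000000

/-- If a subgroup `H` of `G = S_n ≀ S_2` contains an involutive swap, then every tensor product
of coset states `ψ_c` lies in `ℋ₁`; in particular `⟪ψ_c, P₁ ψ_c⟫ = 1`. -/
theorem cosetState_mem_H1_of_swap_mem
    (n m : ℕ) (hn : 0 < n) (hm : 0 < m)
    (H : Subgroup (Wr n)) (hH : ∃ k ∈ H, Wr.IsSwap k)
    (c : Fin m → Wr n) :
    Wr.cosetState H m c ∈ Wr.H1 n m ∧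
      inner (𝕜 := ℂ) (Wr.cosetState H m c)
        (((Wr.H1 n m).orthogonalProjection (Wr.cosetState H m c) : GIHilb n m)) = 1 := by
  classical
  obtain ⟨k, hkH, hkswap⟩ := hH
  have hk1 : k ≠ 1 := by
    obtain ⟨g, rfl⟩ := hkswap
    intro h
    have : (1 : ZMod 2) = (0 : ZMod 2) := congrArg Wr.bit h
    exact absurd this (by decide)
  have hcardpos : 0 < (Nat.card H : ℝ) := by
    have : 0 < Nat.card H := Nat.card_pos
    exact_mod_cast this
  set r2 : ℝ := Real.sqrt (2 ^ m) with hr2def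
  set rH : ℝ := Real.sqrt ((Nat.card H : ℝ) ^ m) with hrHdef
  have hr2 : 0 < r2 := Real.sqrt_pos.mpr (by positivity)
  have hrH : 0 < rH := Real.sqrt_pos.mpr (by positivity)
  have hrH2 : rH * rH = (Nat.card H : ℝ) ^ m := Real.mul_self_sqrt (by positivity)
  set t : ℂ := (((2:ℝ)^m * rH / r2 : ℝ) : ℂ) with htdef
  have ht : t ≠ 0 := by
    simp only [htdef, ne_eq, Complex.ofReal_eq_zero]
    positivity
  have hsum : (∑ h : Fin m → H, Wr.kvec n m k (fun i => c i * ((h i : Wr n))))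
      = t • Wr.cosetState H m c := by
    ext x
    rw [WithLp.ofLp_sum, Finset.sum_apply]
    have hL : ∀ h : Fin m → H, Wr.kvec n m k (fun i => c i * ((h i : Wr n))) x
        = (r2⁻¹ : ℂ) * ∏ i, (if x i = c i * (h i : Wr n) ∨ x i = c i * (h i : Wr n) * k
            then (1:ℂ) else 0) := fun h => rfl
    have hR : (t • Wr.cosetState H m c) x
        = t * ((rH⁻¹ : ℂ) * ∏ i, (if (c i)⁻¹ * x i ∈ H then (1 : ℂ) else 0)) := rfl
    rw [hR]
    calc (∑ h : Fin m → H, Wr.kvec n m k (fun i => c i * ((h i : Wr n))) x)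
        = (r2⁻¹ : ℂ) * ∑ h : Fin m → H, ∏ i,
            (if x i = c i * (h i : Wr n) ∨ x i = c i * (h i : Wr n) * k then (1:ℂ) else 0) := by
          rw [Finset.mul_sum]; exact Finset.sum_congr rfl fun h _ => hL h
      _ = (r2⁻¹ : ℂ) * ∏ i, ∑ hi : H,
            (if x i = c i * (hi : Wr n) ∨ x i = c i * (hi : Wr n) * k then (1:ℂ) else 0) := by
          rw [Fintype.prod_sum]
      _ = (r2⁻¹ : ℂ) * ∏ i, (2 * (if (c i)⁻¹ * x i ∈ H then (1:ℂ) else 0)) := by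
          congr 1
          refine Finset.prod_congr rfl fun i _ => ?_
          convert aux_coord_sum H hk1 hkH (c i) (x i) using 3
      _ = t * ((rH⁻¹ : ℂ) * ∏ i, (if (c i)⁻¹ * x i ∈ H then (1 : ℂ) else 0)) := by
          rw [Finset.prod_mul_distrib, Finset.prod_const, Finset.card_univ, Fintype.card_fin]
          rw [htdef]
          push_cast
          have hrHne : (rH : ℂ) ≠ 0 := by exact_mod_cast hrH.ne'
          have hr2ne : (r2 : ℂ) ≠ 0 := by exact_mod_cast hr2.ne'
          field_simp
  have hmemk : Wr.cosetState H m c ∈ Wr.kSpace n m k := by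
    have heq : Wr.cosetState H m c
        = t⁻¹ • ∑ h : Fin m → H, Wr.kvec n m k (fun i => c i * ((h i : Wr n))) := by
      rw [hsum, smul_smul, inv_mul_cancel₀ ht, one_smul]
    rw [heq]
    exact Submodule.smul_mem _ _ (Submodule.sum_mem _ fun h _ =>
      Submodule.subset_span ⟨_, rfl⟩)
  have hmemH1 : Wr.cosetState H m c ∈ Wr.H1 n m := by
    have hle : Wr.kSpace n m k ≤ Wr.H1 n m :=
      le_iSup₂ (f := fun (k : Wr n) (_ : k ∈ {k : Wr n | Wr.IsSwap k}) => Wr.kSpace n m k) k hkswap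
    exact hle hmemk
  refine ⟨hmemH1, ?_⟩
  rw [← Submodule.starProjection_apply, Submodule.starProjection_eq_self_iff.mpr hmemH1]
  have hval : ∀ x, Wr.cosetState H m c x
      = (rH⁻¹ : ℂ) * ∏ i, (if (c i)⁻¹ * x i ∈ H then (1 : ℂ) else 0) := fun _ => rfl
  rw [PiLp.inner_apply]
  have hterm : ∀ x : Fin m → Wr n,
      inner (𝕜 := ℂ) (Wr.cosetState H m c x) (Wr.cosetState H m c x)
        = ((rH⁻¹ : ℂ) * (rH⁻¹ : ℂ)) * ∏ i, (if (c i)⁻¹ * x i ∈ H then (1 : ℂ) else 0) := by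
    intro x
    rw [RCLike.inner_apply', hval]
    have hconj : (starRingEnd ℂ) ((rH⁻¹ : ℂ) * ∏ i, (if (c i)⁻¹ * x i ∈ H then (1 : ℂ) else 0))
        = (rH⁻¹ : ℂ) * ∏ i, (if (c i)⁻¹ * x i ∈ H then (1 : ℂ) else 0) := by
      rw [map_mul, map_prod]
      congr 1
      · rw [← Complex.ofReal_inv, Complex.conj_ofReal]
      · exact Finset.prod_congr rfl fun i _ => by split <;> simp
    rw [hconj]
    have hsq : (∏ i, (if (c i)⁻¹ * x i ∈ H then (1 : ℂ) else 0))
        * (∏ i, (if (c i)⁻¹ * x i ∈ H then (1 : ℂ) else 0))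
        = ∏ i, (if (c i)⁻¹ * x i ∈ H then (1 : ℂ) else 0) := by
      rw [← Finset.prod_mul_distrib]
      exact Finset.prod_congr rfl fun i _ => by split <;> simp
    calc ((rH⁻¹ : ℂ) * ∏ i, (if (c i)⁻¹ * x i ∈ H then (1 : ℂ) else 0))
          * ((rH⁻¹ : ℂ) * ∏ i, (if (c i)⁻¹ * x i ∈ H then (1 : ℂ) else 0))
        = ((rH⁻¹ : ℂ) * (rH⁻¹ : ℂ)) * ((∏ i, (if (c i)⁻¹ * x i ∈ H then (1 : ℂ) else 0))
            * ∏ i, (if (c i)⁻¹ * x i ∈ H then (1 : ℂ) else 0)) := by ring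
      _ = _ := by rw [hsq]
  calc (∑ x : Fin m → Wr n, inner (𝕜 := ℂ) (Wr.cosetState H m c x) (Wr.cosetState H m c x))
      = ((rH⁻¹ : ℂ) * (rH⁻¹ : ℂ)) * ∑ x : Fin m → Wr n,
          ∏ i, (if (c i)⁻¹ * x i ∈ H then (1 : ℂ) else 0) := by
        rw [Finset.mul_sum]; exact Finset.sum_congr rfl fun x _ => hterm x
    _ = ((rH⁻¹ : ℂ) * (rH⁻¹ : ℂ)) * ∏ i : Fin m, ∑ y : Wr n,
          (if (c i)⁻¹ * y ∈ H then (1 : ℂ) else 0) := by rw [Fintype.prod_sum]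
    _ = ((rH⁻¹ : ℂ) * (rH⁻¹ : ℂ)) * ((Nat.card H : ℂ)) ^ m := by
        rw [Finset.prod_congr rfl fun i _ => aux_coset_count H (c i), Finset.prod_const,
          Finset.card_univ, Fintype.card_fin]
    _ = 1 := by
        have : ((rH : ℂ) * (rH : ℂ)) = ((Nat.card H : ℂ)) ^ m := by
          exact_mod_cast congrArg (Complex.ofReal) hrH2
        rw [← this]
        have hrHne : (rH : ℂ) ≠ 0 := by exact_mod_cast hrH.ne'
        field_simp
end

section
/- Let n and m be positive integers, G = S_n ≀ S_2, and let k ∈ G be an involutive swap. Then the subspace ℋ(k) spanned by all k-vectors has dimension (|G|/2)^m, where |G| = 2·(n!)². -/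
open scoped Classical

section KvecHelpers

variable {n m : ℕ}

lemma Wr.one_def' : (1 : Wr n) = ⟨1, 1, 0⟩ := rfl

lemma Wr.swap_mul_self_s5 {k : Wr n} (hk : Wr.IsSwap k) : k * k = 1 := by
  obtain ⟨g, rfl⟩ := hk
  show Wr.mul ⟨g, g⁻¹, 1⟩ ⟨g, g⁻¹, 1⟩ = ⟨1, 1, 0⟩
  simp [Wr.mul, show (1 : ZMod 2) ≠ 0 by decide, show (1 + 1 : ZMod 2) = 0 by decide]

lemma Wr.swap_ne_one {k : Wr n} (hk : Wr.IsSwap k) : k ≠ 1 := by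
  obtain ⟨g, rfl⟩ := hk
  intro h
  have h2 : (⟨g, g⁻¹, 1⟩ : Wr n).bit = (1 : Wr n).bit := by rw [h]
  rw [Wr.one_def'] at h2
  exact (show (1 : ZMod 2) ≠ 0 by decide) h2

lemma Wr.mem_zpowers_swap {k : Wr n} (hk : Wr.IsSwap k) {z : Wr n} :
    z ∈ Subgroup.zpowers k ↔ z = 1 ∨ z = k := by
  constructor
  · intro hz
    obtain ⟨i, rfl⟩ := Subgroup.mem_zpowers_iff.mp hz
    have h2 : k ^ (2 : ℤ) = 1 := by
      rw [zpow_two]; exact Wr.swap_mul_self_s5 hk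
    have hi : k ^ i = k ^ (2 * (i / 2) + i % 2) := by rw [Int.mul_ediv_add_emod]
    rw [hi, zpow_add, zpow_mul, h2, one_zpow, one_mul]
    rcases Int.emod_two_eq i with h | h <;> rw [h] <;> simp
  · rintro (rfl | rfl)
    · exact one_mem _
    · exact Subgroup.mem_zpowers _

lemma Wr.kvec_apply (k : Wr n) (c x : Fin m → Wr n) :
    Wr.kvec n m k c x = ((Real.sqrt (2 ^ m) : ℝ)⁻¹ : ℂ) *
      ∏ i, (if x i = c i ∨ x i = c i * k then (1 : ℂ) else 0) := rfl

lemma Wr.kvec_congr {k : Wr n} (hk : Wr.IsSwap k) {c c' : Fin m → Wr n}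
    (h : ∀ i, (c i)⁻¹ * c' i ∈ Subgroup.zpowers k) :
    Wr.kvec n m k c = Wr.kvec n m k c' := by
  have hkk := Wr.swap_mul_self_s5 hk
  apply (WithLp.equiv 2 _).symm.injective.eq_iff.mpr
  funext x
  show Wr.kvec n m k c x = Wr.kvec n m k c' x
  rw [Wr.kvec_apply, Wr.kvec_apply]
  congr 1
  refine Finset.prod_congr rfl fun i _ => ?_
  rcases (Wr.mem_zpowers_swap hk).mp (h i) with h1 | h1
  · have : c' i = c i := by
      have := inv_mul_eq_one.mp h1
      exact this.symm
    rw [this]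
  · have hci : c' i = c i * k := by
      rw [← h1, mul_inv_cancel_left]
    rw [hci]
    have : c i * k * k = c i := by rw [mul_assoc, hkk, mul_one]
    rw [this]
    exact if_congr (or_comm) rfl rfl

lemma Wr.sum_indicator_pair {k : Wr n} (hk : Wr.IsSwap k) (d : Wr n) :
    ∑ j : Wr n, (if j = d ∨ j = d * k then (1 : ℂ) else 0) = 2 := by
  have hne : d ≠ d * k := by
    intro h
    exact Wr.swap_ne_one hk (left_eq_mul.mp h)
  have hsplit : ∀ j : Wr n, (if j = d ∨ j = d * k then (1 : ℂ) else 0) =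
      (if j = d then (1 : ℂ) else 0) + (if j = d * k then (1 : ℂ) else 0) := by
    intro j
    by_cases h1 : j = d <;> by_cases h2 : j = d * k <;> simp_all
  simp only [hsplit]
  rw [Finset.sum_add_distrib, Finset.sum_ite_eq' Finset.univ d (fun _ => (1 : ℂ)),
    Finset.sum_ite_eq' Finset.univ (d * k) (fun _ => (1 : ℂ))]
  norm_num

lemma Wr.kvec_inner_self {k : Wr n} (hk : Wr.IsSwap k) (c : Fin m → Wr n) :
    (inner ℂ (Wr.kvec n m k c) (Wr.kvec n m k c) : ℂ) = 1 := by
  simp only [PiLp.inner_apply, RCLike.inner_apply, Wr.kvec_apply]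
  have hconj : ∀ x : Fin m → Wr n,
      (starRingEnd ℂ) (((Real.sqrt (2 ^ m) : ℝ)⁻¹ : ℂ) *
        ∏ i, (if x i = c i ∨ x i = c i * k then (1 : ℂ) else 0)) =
      ((Real.sqrt (2 ^ m) : ℝ)⁻¹ : ℂ) *
        ∏ i, (if x i = c i ∨ x i = c i * k then (1 : ℂ) else 0) := by
    intro x
    rw [map_mul, map_inv₀, Complex.conj_ofReal, map_prod]
    congr 1
    refine Finset.prod_congr rfl fun i _ => ?_
    split <;> simp
  simp only [hconj]
  have hPP : ∀ x : Fin m → Wr n,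
      (∏ i, (if x i = c i ∨ x i = c i * k then (1 : ℂ) else 0)) *
      (∏ i, (if x i = c i ∨ x i = c i * k then (1 : ℂ) else 0)) =
      ∏ i, (if x i = c i ∨ x i = c i * k then (1 : ℂ) else 0) := by
    intro x
    rw [← Finset.prod_mul_distrib]
    refine Finset.prod_congr rfl fun i _ => ?_
    split <;> simp
  have key : ∀ x : Fin m → Wr n,
      (((Real.sqrt (2 ^ m) : ℝ)⁻¹ : ℂ) *
        ∏ i, (if x i = c i ∨ x i = c i * k then (1 : ℂ) else 0)) *
      (((Real.sqrt (2 ^ m) : ℝ)⁻¹ : ℂ) *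
        ∏ i, (if x i = c i ∨ x i = c i * k then (1 : ℂ) else 0)) =
      (((Real.sqrt (2 ^ m) : ℝ)⁻¹ : ℂ) * ((Real.sqrt (2 ^ m) : ℝ)⁻¹ : ℂ)) *
        ∏ i, (if x i = c i ∨ x i = c i * k then (1 : ℂ) else 0) := by
    intro x
    rw [mul_mul_mul_comm, hPP]
  simp only [key]
  rw [← Finset.mul_sum]
  have hsum : ∑ x : Fin m → Wr n, ∏ i, (if x i = c i ∨ x i = c i * k then (1 : ℂ) else 0)
      = 2 ^ m := by
    rw [← Fintype.piFinset_univ,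
      Finset.sum_prod_piFinset Finset.univ
        (fun i j => if j = c i ∨ j = c i * k then (1 : ℂ) else 0)]
    have : ∀ i : Fin m, ∑ j : Wr n, (if j = c i ∨ j = c i * k then (1 : ℂ) else 0) = 2 :=
      fun i => Wr.sum_indicator_pair hk (c i)
    rw [Finset.prod_congr rfl fun i _ => this i, Finset.prod_const, Finset.card_univ,
      Fintype.card_fin]
  rw [hsum, ← mul_inv, ← Complex.ofReal_mul, Real.mul_self_sqrt (by positivity)]
  have h2m : ((2 : ℂ) ^ m) ≠ 0 := pow_ne_zero _ two_ne_zero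
  rw [show ((2 ^ m : ℝ) : ℂ) = (2 : ℂ) ^ m by push_cast; ring]
  exact inv_mul_cancel₀ h2m

lemma Wr.kvec_inner_orth {k : Wr n} (hk : Wr.IsSwap k) {c c' : Fin m → Wr n}
    (h : ∃ i, (c i)⁻¹ * c' i ∉ Subgroup.zpowers k) :
    (inner ℂ (Wr.kvec n m k c) (Wr.kvec n m k c') : ℂ) = 0 := by
  obtain ⟨i0, hi0⟩ := h
  have hkk := Wr.swap_mul_self_s5 hk
  simp only [PiLp.inner_apply, RCLike.inner_apply, Wr.kvec_apply]
  refine Finset.sum_eq_zero fun x _ => ?_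
  by_cases hc : x i0 = c i0 ∨ x i0 = c i0 * k
  · by_cases hc' : x i0 = c' i0 ∨ x i0 = c' i0 * k
    · exfalso
      apply hi0
      rw [Wr.mem_zpowers_swap hk]
      rcases hc with h1 | h1 <;> rcases hc' with h2 | h2
      · left; rw [← h1, h2, inv_mul_cancel]
      · right
        have : c i0 = c' i0 * k := by rw [← h1, h2]
        have hc'e : c' i0 = c i0 * k := by
          rw [this, mul_assoc, hkk, mul_one]
        rw [hc'e, ← mul_assoc, inv_mul_cancel, one_mul]
      · right
        have : c' i0 = c i0 * k := by rw [← h2, h1]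
        rw [this, ← mul_assoc, inv_mul_cancel, one_mul]
      · left
        have : c i0 * k = c' i0 * k := by rw [← h1, h2]
        have := mul_right_cancel this
        rw [← this, inv_mul_cancel]
    · have hz : (∏ i, (if x i = c' i ∨ x i = c' i * k then (1 : ℂ) else 0)) = 0 :=
        Finset.prod_eq_zero (Finset.mem_univ i0) (if_neg hc')
      rw [hz, mul_zero, zero_mul]
  · have hz : (∏ i, (if x i = c i ∨ x i = c i * k then (1 : ℂ) else 0)) = 0 :=
      Finset.prod_eq_zero (Finset.mem_univ i0) (if_neg hc)
    rw [hz, mul_zero, map_zero, mul_zero]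

end KvecHelpers

/-- The subspace `ℋ(k)` spanned by all `k`-vectors has dimension `(|G|/2)^m`,
where `|G| = 2·(n!)²`. -/
theorem finrank_kSpace
    (n m : ℕ) (hn : 0 < n) (hm : 0 < m)
    (k : Wr n) (hk : Wr.IsSwap k) :
    Fintype.card (Wr n) = 2 * n.factorial ^ 2 ∧
      Module.finrank ℂ (Wr.kSpace n m k) = (Fintype.card (Wr n) / 2) ^ m := by
  classical
  -- cardinality of the group
  have e : Wr n ≃ Equiv.Perm (Fin n) × Equiv.Perm (Fin n) × ZMod 2 :=
    { toFun := fun x => (x.fst, x.snd, x.bit)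
      invFun := fun p => ⟨p.1, p.2.1, p.2.2⟩
      left_inv := fun x => rfl
      right_inv := fun p => rfl }
  have cardG : Fintype.card (Wr n) = 2 * n.factorial ^ 2 := by
    rw [Fintype.card_congr e, Fintype.card_prod, Fintype.card_prod, Fintype.card_perm,
      Fintype.card_fin, ZMod.card]
    ring
  refine ⟨cardG, ?_⟩
  set H := Subgroup.zpowers k with hH
  haveI : Fact (Nat.Prime 2) := ⟨Nat.prime_two⟩
  have hordk : orderOf k = 2 :=
    orderOf_eq_prime (by rw [pow_two]; exact Wr.swap_mul_self_s5 hk) (Wr.swap_ne_one hk)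
  have hcardH : Nat.card H = 2 := by rw [hH, Nat.card_zpowers, hordk]
  have hquot := Subgroup.card_eq_card_quotient_mul_card_subgroup H
  rw [hcardH, Nat.card_eq_fintype_card, cardG] at hquot
  haveI : Fintype (Wr n ⧸ H) := Fintype.ofFinite _
  have hcardQ : Fintype.card (Wr n ⧸ H) = n.factorial ^ 2 := by
    rw [← Nat.card_eq_fintype_card]; omega
  -- orthonormal family indexed by coset tuples
  set u : (Fin m → Wr n ⧸ H) → GIHilb n m :=
    fun q => Wr.kvec n m k (fun i => (q i).out) with hu
  have hon : Orthonormal ℂ u := by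
    rw [orthonormal_iff_ite]
    intro q q'
    by_cases hqq : q = q'
    · subst hqq
      rw [if_pos rfl]
      exact Wr.kvec_inner_self hk _
    · rw [if_neg hqq]
      apply Wr.kvec_inner_orth hk
      obtain ⟨i0, hi0⟩ := Function.ne_iff.mp hqq
      refine ⟨i0, fun hmem => hi0 ?_⟩
      have : ((q i0).out : Wr n ⧸ H) = ((q' i0).out : Wr n ⧸ H) :=
        QuotientGroup.eq.mpr hmem
      rwa [QuotientGroup.out_eq', QuotientGroup.out_eq'] at this
  have hrange : Set.range (Wr.kvec n m k) = Set.range u := by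
    apply Set.Subset.antisymm
    · rintro _ ⟨c, rfl⟩
      refine ⟨fun i => QuotientGroup.mk (c i), ?_⟩
      rw [hu]
      apply (Wr.kvec_congr hk fun i => ?_).symm
      exact QuotientGroup.eq.mp (QuotientGroup.out_eq' (QuotientGroup.mk (c i))).symm
    · rintro _ ⟨q, rfl⟩
      exact ⟨_, rfl⟩
  have hspan : Wr.kSpace n m k = Submodule.span ℂ (Set.range u) := by
    rw [Wr.kSpace, hrange]
  rw [hspan, finrank_span_eq_card hon.linearIndependent, Fintype.card_fun,
    Fintype.card_fin, hcardQ, cardG]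
  congr 1
  omega
end

section
/- Let n be a positive integer, let Γ₁ and Γ₂ be simple graphs on n vertices, let Γ be their disjoint union, and let H ≤ G = S_n ≀ S_2 be the subgroup of elements acting as automorphisms of Γ. Then Γ₁ and Γ₂ are isomorphic if and only if H contains an involutive swap, i.e., an element of the form (g, g⁻¹, 1) with g ∈ S_n. -/
open scoped Classical

lemma iota_swap_inl {n : ℕ} (a b : Equiv.Perm (Fin n)) (i : Fin n) :
    Wr.iota (⟨a, b, 1⟩ : Wr n) (Sum.inl i) = Sum.inr (b i) := by
  simp [Wr.iota, show (1 : ZMod 2) ≠ 0 by decide]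

lemma iota_swap_inr {n : ℕ} (a b : Equiv.Perm (Fin n)) (i : Fin n) :
    Wr.iota (⟨a, b, 1⟩ : Wr n) (Sum.inr i) = Sum.inl (a i) := by
  simp [Wr.iota, show (1 : ZMod 2) ≠ 0 by decide]

/-- `Γ₁` and `Γ₂` are isomorphic if and only if the automorphism subgroup `H ≤ S_n ≀ S_2`
of the disjoint union graph contains an involutive swap `(g, g⁻¹, 1)`. -/
theorem iso_iff_exists_swap_mem_autSubgroup
    (n : ℕ) (hn : 0 < n) (Γ₁ Γ₂ : SimpleGraph (Fin n)) :
    Nonempty (Γ₁ ≃g Γ₂) ↔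
      ∃ g : Equiv.Perm (Fin n), (⟨g, g⁻¹, 1⟩ : Wr n) ∈ autSubgroup (Γ₁ ⊕g Γ₂) := by
  constructor
  · rintro ⟨e⟩
    refine ⟨e.symm.toEquiv, fun u v => ?_⟩
    rcases u with u | u <;> rcases v with v | v <;>
      simp [iota_swap_inl, iota_swap_inr, SimpleGraph.sum_adj,
        show (e.symm.toEquiv)⁻¹ = e.toEquiv from rfl]
    · exact e.map_adj_iff
    · exact e.symm.map_adj_iff
  · rintro ⟨g, hg⟩
    refine ⟨⟨(g⁻¹ : Equiv.Perm (Fin n)), fun {u v} => ?_⟩⟩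
    have := hg (Sum.inl u) (Sum.inl v)
    simpa [iota_swap_inl, SimpleGraph.sum_adj] using this
end
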